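/- Suppose Y_1, …, Y_h ∈ R satisfy f^{(2)}(Y_i) = 0 for all i, and set X_i := f(Y_i). Then for every matrix M ∈ M_h(F_q[t]), g( Σ_{i=1}^h μ(X_1, …, X_{i−1}, (M⋆Y)_i, X_{i+1}, …, X_h) ) equals the determinant of the h×h matrix whose i-th row is ((M⋆X)_i, X_i^q, X_i^{q^2}, …, X_i^{q^{h−1}}). -/

import Mathlib

open Finset

noncomputable section

/-- The Moore determinant `μ(X₁, …, X_h) = det (Xᵢ^{q^{j-1}})`. -/
def moore (q : ℕ) {h : ℕ} {R : Type*} [CommRing R] (X : Fin h → R) : R :=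
  Matrix.det (Matrix.of fun i j : Fin h => X i ^ q ^ (j : ℕ))

/-- `f(X) = πX + u₁X^q + ⋯ + u_{h−1}X^{q^{h−1}} + X^{q^h}`. -/
def fmap (q h : ℕ) {R : Type*} [CommRing R] (π : R) (u : ℕ → R) (X : R) : R :=
  π * X + (∑ k ∈ Finset.Ico 1 h, u k * X ^ q ^ k) + X ^ q ^ h

/-- `g(T) = πT + (−1)^{h−1}T^q`. -/
def gmap (q h : ℕ) {R : Type*} [CommRing R] (π : R) (T : R) : R :=
  π * T + (-1) ^ (h - 1) * T ^ q

/-- For a polynomial `a = Σ c_m t^m ∈ F_q[t]`, `[a]_f(X) := Σ c_m f^(m)(X)`. -/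
def actF (q h : ℕ) {R : Type*} [CommRing R] (π : R) (u : ℕ → R)
    (K : Type*) [Field K] [Algebra K R] (a : Polynomial K) (X : R) : R :=
  ∑ m ∈ a.support, algebraMap K R (a.coeff m) * (fmap q h π u)^[m] X

/-- For `M = (a_{ij}) ∈ M_h(F_q[t])` and `Z ∈ R^h`, `(M⋆Z)ᵢ := Σ_j [a_{ij}]_f(Z_j)`. -/
def mStar (q h : ℕ) {R : Type*} [CommRing R] (π : R) (u : ℕ → R)
    (K : Type*) [Field K] [Algebra K R]
    (M : Matrix (Fin h) (Fin h) (Polynomial K)) (Z : Fin h → R) (i : Fin h) : R :=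
  ∑ j, actF q h π u K (M i j) (Z j)

/-! ### Auxiliary lemmas -/

section Aux

variable {R : Type*} [CommRing R]

lemma det_updateCol_sum {n : ℕ} (A : Matrix (Fin n) (Fin n) R) (j : Fin n)
    {ι : Type*} (s : Finset ι) (g : ι → Fin n → R) :
    (A.updateCol j (fun r => ∑ k ∈ s, g k r)).det
      = ∑ k ∈ s, (A.updateCol j (g k)).det := by
  classical
  induction s using Finset.cons_induction with
  | empty =>
      simp only [Finset.sum_empty]
      exact Matrix.det_eq_zero_of_column_eq_zero j (fun i => by
        simp [Matrix.updateCol_self])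
  | cons a s ha ih =>
      simp_rw [Finset.sum_cons]
      exact (Matrix.det_updateCol_add A j (g a) (fun r => ∑ k ∈ s, g k r)).trans
        (by rw [ih])

lemma alg_aux (A x y a b : R) (h : A * A = 1) :
    A * (x * (A * a) - y * (A * b)) = x * a - y * b := by
  linear_combination (x * a - y * b) * h

/-- Rotating the columns: the matrix with columns `w^{q}, …, w^{q^{h'}}, c`
has determinant `(-1)^{h'}` times that of the matrix with columns
`c, w^{q}, …, w^{q^{h'}}`. -/
lemma aux_rot (q h' : ℕ) (w c : Fin (h' + 1) → R) :
    ((Matrix.of fun r j : Fin (h' + 1) => w r ^ q ^ ((j : ℕ) + 1)).updateCol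
        (Fin.last h') c).det
      = (-1 : R) ^ h' * (Matrix.of fun r j : Fin (h' + 1) =>
          if (j : ℕ) = 0 then c r else w r ^ q ^ (j : ℕ)).det := by
  have hM : (Matrix.of fun r j : Fin (h' + 1) => w r ^ q ^ ((j : ℕ) + 1)).updateCol
        (Fin.last h') c
      = (Matrix.of fun r j : Fin (h' + 1) =>
          if (j : ℕ) = 0 then c r else w r ^ q ^ (j : ℕ)).submatrix id (finRotate (h' + 1)) := by
    ext r j
    rcases eq_or_ne j (Fin.last h') with rfl | hj
    · simp [Matrix.updateCol_apply, finRotate_last]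
    · have hlt : j < Fin.last h' := lt_of_le_of_ne (Fin.le_last j) hj
      have hval : ((finRotate (h' + 1)) j : ℕ) = (j : ℕ) + 1 := by
        rw [finRotate_succ_apply]
        exact Fin.val_add_one_of_lt hlt
      have hval' : (((j + 1 : Fin (h' + 1))) : ℕ) = (j : ℕ) + 1 :=
        Fin.val_add_one_of_lt hlt
      simp [Matrix.updateCol_apply, hj, hval',
        show j + 1 ≠ 0 from fun h0 => by rw [h0] at hval'; simp at hval']
  rw [hM, Matrix.det_permute', sign_finRotate]
  simp

/-- Duplicate-column vanishing. -/
lemma aux_dup (q h' : ℕ) (w : Fin (h' + 1) → R) (k : ℕ) (hk1 : 1 ≤ k) (hk2 : k < h' + 1) :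
    ((Matrix.of fun r j : Fin (h' + 1) => w r ^ q ^ ((j : ℕ) + 1)).updateCol
        (Fin.last h') (fun r => w r ^ q ^ k)).det = 0 := by
  rw [← Matrix.det_transpose]
  have hne : (⟨k - 1, by omega⟩ : Fin (h' + 1)) ≠ Fin.last h' := by
    refine Fin.ne_of_val_ne ?_
    simp only [Fin.val_last]
    omega
  refine Matrix.det_zero_of_row_eq hne ?_
  funext r
  show ((Matrix.of fun r j : Fin (h' + 1) => w r ^ q ^ ((j : ℕ) + 1)).updateCol
      (Fin.last h') (fun r => w r ^ q ^ k)) r ⟨k - 1, by omega⟩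
    = ((Matrix.of fun r j : Fin (h' + 1) => w r ^ q ^ ((j : ℕ) + 1)).updateCol
      (Fin.last h') (fun r => w r ^ q ^ k)) r (Fin.last h')
  rw [Matrix.updateCol_apply, Matrix.updateCol_apply, if_neg hne, if_pos rfl]
  simp only [Matrix.of_apply]
  rw [Nat.sub_add_cancel hk1]

/-- The two "elementary column" determinants agree when `w` and `x` differ only at row `i`. -/
lemma aux_single_det (q h' : ℕ) (w x : Fin (h' + 1) → R) (i : Fin (h' + 1))
    (hwx : ∀ r, r ≠ i → w r = x r) :
    (Matrix.of fun r j : Fin (h' + 1) =>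
        if (j : ℕ) = 0 then (Pi.single i 1 : Fin (h' + 1) → R) r else w r ^ q ^ (j : ℕ)).det
      = (Matrix.of fun r j : Fin (h' + 1) =>
        if (j : ℕ) = 0 then (Pi.single i 1 : Fin (h' + 1) → R) r else x r ^ q ^ (j : ℕ)).det := by
  rw [Matrix.det_succ_column_zero, Matrix.det_succ_column_zero]
  refine Finset.sum_congr rfl fun r _ => ?_
  rcases eq_or_ne r i with rfl | hr
  · congr 1
    congr 1
    ext r' j'
    simp only [Matrix.submatrix_apply, Matrix.of_apply, Fin.val_succ, Nat.succ_ne_zero,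
      if_false]
    rw [hwx _ (Fin.succAbove_ne r r')]
  · simp [hr]

/-- Expansion of the target determinant along its first column. -/
lemma aux_rhs (q h' : ℕ) (F x : Fin (h' + 1) → R) :
    (Matrix.of fun r j : Fin (h' + 1) =>
        if (j : ℕ) = 0 then F r else x r ^ q ^ (j : ℕ)).det
      = ∑ i, F i * (Matrix.of fun r j : Fin (h' + 1) =>
          if (j : ℕ) = 0 then (Pi.single i 1 : Fin (h' + 1) → R) r else x r ^ q ^ (j : ℕ)).det := by
  rw [Matrix.det_succ_column_zero]
  refine Finset.sum_congr rfl fun i _ => ?_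
  rw [Matrix.det_succ_column_zero, Finset.mul_sum, Finset.sum_eq_single i]
  · have hsub : ((Matrix.of fun r j : Fin (h' + 1) =>
          if (j : ℕ) = 0 then F r else x r ^ q ^ (j : ℕ)).submatrix i.succAbove Fin.succ)
        = ((Matrix.of fun r j : Fin (h' + 1) =>
          if (j : ℕ) = 0 then (Pi.single i 1 : Fin (h' + 1) → R) r
          else x r ^ q ^ (j : ℕ)).submatrix i.succAbove Fin.succ) := by
      ext r' j'
      simp [Fin.val_succ]
    rw [hsub]
    have h1 : (Matrix.of fun r j : Fin (h' + 1) =>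
        if (j : ℕ) = 0 then F r else x r ^ q ^ (j : ℕ)) i 0 = F i := by simp
    have h2 : (Matrix.of fun r j : Fin (h' + 1) =>
        if (j : ℕ) = 0 then (Pi.single i 1 : Fin (h' + 1) → R) r
        else x r ^ q ^ (j : ℕ)) i 0 = 1 := by simp
    rw [h1, h2]
    ring
  · intro b _ hb
    simp [hb]
  · intro h
    exact absurd (Finset.mem_univ i) h

/-- The Frobenius-twisted Moore determinant computation. -/
lemma aux_det_B (q h' : ℕ) (π : R) (u : ℕ → R)
    (w : Fin (h' + 1) → R) (i : Fin (h' + 1)) (Fi : R)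
    (hw : ∀ r, fmap q (h' + 1) π u (w r) = (Pi.single i Fi : Fin (h' + 1) → R) r) :
    (Matrix.of fun r j : Fin (h' + 1) => w r ^ q ^ ((j : ℕ) + 1)).det
      = Fi * ((-1 : R) ^ h' * (Matrix.of fun r j : Fin (h' + 1) =>
            if (j : ℕ) = 0 then (Pi.single i 1 : Fin (h' + 1) → R) r
            else w r ^ q ^ (j : ℕ)).det)
        - π * ((-1 : R) ^ h' * (Matrix.of fun r j : Fin (h' + 1) => w r ^ q ^ (j : ℕ)).det) := by
  classical
  set B := Matrix.of fun r j : Fin (h' + 1) => w r ^ q ^ ((j : ℕ) + 1) with hBdef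
  have hcol : (fun r => B r (Fin.last h'))
      = (Pi.single i Fi + (-π) • w) + fun r => ∑ k ∈ Finset.Ico 1 (h' + 1),
          (-(u k)) * w r ^ q ^ k := by
    funext r
    have h1 := hw r
    simp only [fmap] at h1
    have h3 : ∑ k ∈ Finset.Ico 1 (h' + 1), (-(u k)) * w r ^ q ^ k
        = -∑ k ∈ Finset.Ico 1 (h' + 1), u k * w r ^ q ^ k := by
      rw [← Finset.sum_neg_distrib]
      exact Finset.sum_congr rfl fun k _ => by ring
    simp only [hBdef, Matrix.of_apply, Fin.val_last, Pi.add_apply, Pi.smul_apply,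
      smul_eq_mul]
    rw [h3]
    linear_combination h1
  have hsum0 : (B.updateCol (Fin.last h')
      (fun r => ∑ k ∈ Finset.Ico 1 (h' + 1), (-(u k)) * w r ^ q ^ k)).det = 0 := by
    refine (det_updateCol_sum B (Fin.last h') (Finset.Ico 1 (h' + 1))
      (fun k r => (-(u k)) * w r ^ q ^ k)).trans ?_
    refine Finset.sum_eq_zero fun k hk => ?_
    obtain ⟨hk1, hk2⟩ := Finset.mem_Ico.mp hk
    show (B.updateCol (Fin.last h') (fun r => (-(u k)) * w r ^ q ^ k)).det = 0
    have hfun : (fun r => (-(u k)) * w r ^ q ^ k)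
        = (-(u k)) • (fun r => w r ^ q ^ k) := rfl
    rw [hfun, Matrix.det_updateCol_smul, hBdef, aux_dup q h' w k hk1 hk2, mul_zero]
  have hsing : (Pi.single i Fi : Fin (h' + 1) → R)
      = Fi • (Pi.single i 1 : Fin (h' + 1) → R) := by
    funext r
    rcases eq_or_ne r i with rfl | hr
    · simp
    · simp [hr]
  conv_lhs => rw [← Matrix.updateCol_eq_self B (Fin.last h'), hcol]
  rw [Matrix.det_updateCol_add, Matrix.det_updateCol_add, hsum0, add_zero,
    Matrix.det_updateCol_smul, hsing, Matrix.det_updateCol_smul,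
    hBdef, aux_rot q h' w (Pi.single i 1), aux_rot q h' w w]
  have hplain : (Matrix.of fun r j : Fin (h' + 1) =>
        if (j : ℕ) = 0 then w r else w r ^ q ^ (j : ℕ))
      = Matrix.of fun r j : Fin (h' + 1) => w r ^ q ^ (j : ℕ) := by
    ext r j
    simp only [Matrix.of_apply]
    split_ifs with hj
    · rw [hj, pow_zero, pow_one]
    · rfl
  rw [hplain]
  ring

/-- The core identity:  if `f(Xⱼ) = 0` for all `j` and `f(Vᵢ) = Fᵢ`, then
`g(Σᵢ μ(X₁,…,Vᵢ,…,X_h)) = det (F | X^q | ⋯ | X^{q^{h-1}})`. -/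
lemma core (q h' : ℕ) {R : Type*} [CommRing R]
    (φ : R →+* R) (hφ : ∀ x : R, φ x = x ^ q)
    (π : R) (u : ℕ → R) (X V F : Fin (h' + 1) → R)
    (hX : ∀ j, fmap q (h' + 1) π u (X j) = 0)
    (hV : ∀ i, fmap q (h' + 1) π u (V i) = F i) :
    gmap q (h' + 1) π (∑ i, moore q (Function.update X i (V i)))
      = (Matrix.of fun r j : Fin (h' + 1) =>
          if (j : ℕ) = 0 then F r else X r ^ q ^ (j : ℕ)).det := by
  classical
  have hW : ∀ i r, fmap q (h' + 1) π u (Function.update X i (V i) r)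
      = (Pi.single i (F i) : Fin (h' + 1) → R) r := by
    intro i r
    rcases eq_or_ne r i with rfl | hr
    · rw [Function.update_self, hV r, Pi.single_eq_same]
    · rw [Function.update_of_ne hr, hX r]
      simp [hr]
  have hfrob : ∀ i, φ (moore q (Function.update X i (V i)))
      = (Matrix.of fun r j : Fin (h' + 1) =>
          Function.update X i (V i) r ^ q ^ ((j : ℕ) + 1)).det := by
    intro i
    simp only [moore]
    rw [RingHom.map_det]
    congr 1
    ext r j
    simp only [RingHom.mapMatrix_apply, Matrix.map_apply, Matrix.of_apply, hφ,
      ← pow_mul, ← pow_succ]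
  have hkey : ∀ i, (-1 : R) ^ h' * φ (moore q (Function.update X i (V i)))
      = F i * (Matrix.of fun r j : Fin (h' + 1) =>
          if (j : ℕ) = 0 then (Pi.single i 1 : Fin (h' + 1) → R) r
          else X r ^ q ^ (j : ℕ)).det
        - π * moore q (Function.update X i (V i)) := by
    intro i
    rw [hfrob i, aux_det_B q h' π u (Function.update X i (V i)) i (F i) (hW i),
      aux_single_det q h' (Function.update X i (V i)) X i
        (fun r hr => Function.update_of_ne hr (V i) X)]
    simp only [moore]
    have h11 : (-1 : R) ^ h' * (-1 : R) ^ h' = 1 := by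
      rw [← mul_pow]
      norm_num
    exact alg_aux _ _ _ _ _ h11
  have hSq : (∑ i, moore q (Function.update X i (V i))) ^ q
      = ∑ i, φ (moore q (Function.update X i (V i))) := by
    rw [← hφ, map_sum]
  simp only [gmap, Nat.add_sub_cancel]
  have hsum : (-1 : R) ^ h' * ∑ i, φ (moore q (Function.update X i (V i)))
      = ∑ i, (F i * (Matrix.of fun r j : Fin (h' + 1) =>
          if (j : ℕ) = 0 then (Pi.single i 1 : Fin (h' + 1) → R) r
          else X r ^ q ^ (j : ℕ)).det
        - π * moore q (Function.update X i (V i))) := by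
    rw [Finset.mul_sum]
    exact Finset.sum_congr rfl fun i _ => hkey i
  rw [hSq, hsum, Finset.sum_sub_distrib, ← Finset.mul_sum, aux_rhs q h' F X]
  ring

end Aux

/-! ### Properties of `fmap` in characteristic `p` -/

section Fprops

variable {R : Type*} [CommRing R]

lemma fmap_add (p e q h : ℕ) [ExpChar R p] (hq : q = p ^ e)
    (π : R) (u : ℕ → R) (a b : R) :
    fmap q h π u (a + b) = fmap q h π u a + fmap q h π u b := by
  subst hq
  simp only [fmap, ← pow_mul, add_pow_expChar_pow, mul_add, Finset.sum_add_distrib]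
  ring

lemma fmap_zero (p e q h : ℕ) (hp : p.Prime) (hq : q = p ^ e)
    (π : R) (u : ℕ → R) :
    fmap q h π u (0 : R) = 0 := by
  subst hq
  have h1 : ∀ k : ℕ, (p ^ e) ^ k ≠ 0 := fun k =>
    pow_ne_zero _ (pow_ne_zero _ hp.pos.ne')
  simp [fmap, show ∀ k : ℕ, (0 : R) ^ (p ^ e) ^ k = 0 from fun k => zero_pow (h1 k)]

lemma fmap_sum (p e q h : ℕ) [ExpChar R p] (hp : p.Prime) (hq : q = p ^ e)
    (π : R) (u : ℕ → R) {ι : Type*} (s : Finset ι) (g : ι → R) :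
    fmap q h π u (∑ x ∈ s, g x) = ∑ x ∈ s, fmap q h π u (g x) := by
  classical
  induction s using Finset.cons_induction with
  | empty => simpa using fmap_zero p e q h hp hq π u
  | cons a s ha ih => rw [Finset.sum_cons, Finset.sum_cons, fmap_add p e q h hq π u, ih]

lemma fmap_cmul (q h : ℕ) {K : Type*} [Field K] [Algebra K R]
    (π : R) (u : ℕ → R) (c : K) (hc : ∀ k : ℕ, c ^ q ^ k = c) (x : R) :
    fmap q h π u (algebraMap K R c * x) = algebraMap K R c * fmap q h π u x := by
  simp only [fmap, mul_pow, ← map_pow, hc, mul_add, Finset.mul_sum]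
  congr 1
  · congr 1
    · ring
    · exact Finset.sum_congr rfl fun k _ => by ring

end Fprops

/-- Suppose `f^(2)(Yᵢ) = 0` for all `i` and set `Xᵢ := f(Yᵢ)`.  Then for every matrix
`M ∈ M_h(F_q[t])`, `g(Σᵢ μ(X₁, …, X_{i−1}, (M⋆Y)ᵢ, X_{i+1}, …, X_h))` equals the
determinant of the `h×h` matrix whose `i`-th row is `((M⋆X)ᵢ, Xᵢ^q, …, Xᵢ^{q^{h−1}})`. -/
theorem gmap_sum_moore_mStar_eq_det
    (p e q h : ℕ) (hp : p.Prime) (he : 1 ≤ e) (hq : q = p ^ e) (hh : 1 ≤ h)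
    (K : Type*) [Field K] [Fintype K] [DecidableEq K] (hK : Fintype.card K = q)
    (R : Type*) [CommRing R] [Algebra K R]
    (π : R) (u : ℕ → R) (Y : Fin h → R)
    (hY : ∀ i, (fmap q h π u)^[2] (Y i) = 0)
    (X : Fin h → R) (hXdef : ∀ i, X i = fmap q h π u (Y i))
    (M : Matrix (Fin h) (Fin h) (Polynomial K)) :
    gmap q h π (∑ i, moore q (Function.update X i (mStar q h π u K M Y i)))
      = Matrix.det (Matrix.of fun i j : Fin h =>
          if (j : ℕ) = 0 then mStar q h π u K M X i else X i ^ q ^ (j : ℕ)) := by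
  classical
  rcases subsingleton_or_nontrivial R with hR | hR
  · exact Subsingleton.elim _ _
  -- identify the characteristic of `K`
  obtain ⟨p', hp'⟩ := CharP.exists K
  haveI := hp'
  obtain ⟨m, hp'p, hcard⟩ := FiniteField.card K p'
  have hpp : p' = p := by
    have hdvd : p' ∣ p ^ e := by
      rw [← hq, ← hK, hcard]
      exact dvd_pow_self p' m.pos.ne'
    exact (Nat.prime_dvd_prime_iff_eq hp'p hp).mp (hp'p.dvd_of_dvd_pow hdvd)
  subst hpp
  haveI : CharP R p' := charP_of_injective_algebraMap' K (A := R) p'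
  haveI : ExpChar R p' := ExpChar.prime hp
  -- the `q`-power Frobenius
  set φ : R →+* R := iterateFrobenius R p' e with hφdef
  have hφ : ∀ x : R, φ x = x ^ q := fun x => by
    rw [hφdef, iterateFrobenius_def, hq]
  -- coefficients of `F_q[t]` are fixed by the `q`-power map
  have hc1 : ∀ c : K, c ^ q = c := fun c => by
    rw [← hK]; exact FiniteField.pow_card c
  have hcpow : ∀ (c : K) (k : ℕ), c ^ q ^ k = c := by
    intro c k
    induction k with
    | zero => simp
    | succ k ih => rw [pow_succ, pow_mul, ih, hc1]
  -- key facts about `X` and `V := M ⋆ Y`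
  have hfX : ∀ j, fmap q h π u (X j) = 0 := by
    intro j
    rw [hXdef j]
    exact hY j
  have hfV : ∀ i, fmap q h π u (mStar q h π u K M Y i) = mStar q h π u K M X i := by
    intro i
    simp only [mStar, actF]
    rw [fmap_sum p' e q h hp hq]
    refine Finset.sum_congr rfl fun j _ => ?_
    rw [fmap_sum p' e q h hp hq]
    refine Finset.sum_congr rfl fun m _ => ?_
    rw [fmap_cmul q h π u _ (hcpow _)]
    congr 1
    rw [hXdef j, ← Function.iterate_succ_apply' (fmap q h π u) m (Y j),
      ← Function.iterate_succ_apply (fmap q h π u) m (Y j)]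
  obtain ⟨h', rfl⟩ : ∃ h', h = h' + 1 := ⟨h - 1, by omega⟩
  exact core q h' φ hφ π u X (fun i => mStar q (h' + 1) π u K M Y i)
    (fun i => mStar q (h' + 1) π u K M X i) hfX hfV
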